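/- Let A be a finite set, A* ⊆ A, and X = [x_min, x_max] ⊂ ℝ. Let (x(a))_{a∈A} be X-valued random variables, pairwise independent, such that for every a ∈ A* and b ∈ A the variable x(a) first-order stochastically dominates x(b), and such that x(a) and x(a') are identically distributed for a, a' ∈ A*. For each unordered pair {a,b} ⊆ A with a ≠ b let g_{b,a} = g_{a,b}: X² → [−1,1] be a measurable symmetric-switch function, and let σ ∈ Δ(A) be a probability vector. Define σ'(a) := σ(a) + σ(a)·Σ_{b∈A∖{a}} σ(b)·g_{b,a}(x(b), x(a)). Set P := Σ_{a∈A*} σ(a) and δ := min_{a∈A*, b∈A∖A*} E[ g_{b,a}(x(b), x(a)) ]. Then δ ≥ 0 and E[ Σ_{a∈A*} σ'(a) ] − P ≥ δ·P·(1 − P). -/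

import Mathlib

open MeasureTheory ProbabilityTheory Set Finset

lemma aux_integrable_bdd {α : Type*} [MeasurableSpace α] (m : Measure α) [IsFiniteMeasure m]
    {f : α → ℝ} (hf : AEStronglyMeasurable f m) {C : ℝ} (h : ∀ a, |f a| ≤ C) :
    Integrable f m :=
  ⟨hf, HasFiniteIntegral.of_bounded (C := C) (ae_of_all _ (by simpa [Real.norm_eq_abs] using h))⟩

lemma aux_upper_meas {ν lam : Measure ℝ} [IsProbabilityMeasure ν] [IsProbabilityMeasure lam]
    (hle : ∀ z, ν (Set.Iic z) ≤ lam (Set.Iic z)) {U : Set ℝ} (hU : IsUpperSet U) :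
    lam U ≤ ν U := by
  rcases U.eq_empty_or_nonempty with rfl | hne
  · simp
  have hIio : ∀ c : ℝ, ν (Set.Iio c) ≤ lam (Set.Iio c) := by
    intro c
    have hunion : Set.Iio c = ⋃ n : ℕ, Set.Iic (c - 1/(n+1)) := by
      ext t
      simp only [Set.mem_Iio, Set.mem_iUnion, Set.mem_Iic]
      constructor
      · intro ht
        obtain ⟨n, hn⟩ := exists_nat_one_div_lt (ε := c - t) (by linarith)
        exact ⟨n, by linarith⟩
      · rintro ⟨n, hn⟩
        have : (0:ℝ) < 1/(n+1) := by positivity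
        linarith
    have hmono : Monotone (fun n : ℕ => Set.Iic (c - 1/(n+1 : ℝ))) := by
      intro i j hij
      apply Set.Iic_subset_Iic.2
      have : (1:ℝ)/(j+1) ≤ 1/(i+1) := by
        apply one_div_le_one_div_of_le (by positivity)
        have : (i:ℝ) ≤ j := by exact_mod_cast hij
        linarith
      linarith
    rw [hunion, hmono.measure_iUnion, hmono.measure_iUnion]
    exact iSup_mono fun n => hle _
  by_cases hb : BddBelow U
  · set c := sInf U with hc
    have hsub2 : Set.Ioi c ⊆ U := by
      intro t ht
      obtain ⟨u, hu, hut⟩ := exists_lt_of_csInf_lt hne ht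
      exact hU hut.le hu
    by_cases hcU : c ∈ U
    · have hUeq : U = Set.Ici c := by
        apply subset_antisymm
        · exact fun u hu => csInf_le hb hu
        · exact fun t ht => hU ht hcU
      rw [hUeq, ← Set.compl_Iio, measure_compl measurableSet_Iio (measure_ne_top _ _),
        measure_compl measurableSet_Iio (measure_ne_top _ _)]
      simp only [measure_univ]
      exact tsub_le_tsub_left (hIio c) 1
    · have hUeq : U = Set.Ioi c := by
        apply subset_antisymm
        · intro u hu
          exact lt_of_le_of_ne (csInf_le hb hu) (by rintro rfl; exact hcU hu)
        · exact hsub2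
      rw [hUeq, ← Set.compl_Iic, measure_compl measurableSet_Iic (measure_ne_top _ _),
        measure_compl measurableSet_Iic (measure_ne_top _ _)]
      simp only [measure_univ]
      exact tsub_le_tsub_left (hle c) 1
  · have hUeq : U = Set.univ := by
      rw [Set.eq_univ_iff_forall]
      intro t
      obtain ⟨u, hu, hut⟩ := not_bddBelow_iff.1 hb t
      exact hU hut.le hu
    rw [hUeq]; simp

lemma aux_mono_int {ν lam : Measure ℝ} [IsProbabilityMeasure ν] [IsProbabilityMeasure lam]
    (hle : ∀ z, ν (Set.Iic z) ≤ lam (Set.Iic z)) {h : ℝ → ℝ} (hm : Monotone h)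
    (hb : ∀ t, |h t| ≤ 1) : ∫ t, h t ∂lam ≤ ∫ t, h t ∂ν := by
  set f : ℝ → ℝ := fun t => h t + 1 with hf
  have hfm : Monotone f := fun s t hst => by simp only [hf]; linarith [hm hst]
  have hfmeas : Measurable f := hfm.measurable
  have hfnn : ∀ t, 0 ≤ f t := fun t => by have := abs_le.1 (hb t); simp only [hf]; linarith
  have hfle : ∀ t, f t ≤ 2 := fun t => by have := abs_le.1 (hb t); simp only [hf]; linarith
  have hint : ∀ (m : Measure ℝ) [IsProbabilityMeasure m], Integrable h m := fun m _ =>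
    aux_integrable_bdd m hm.measurable.aestronglyMeasurable hb
  have key : ∀ (m : Measure ℝ) [IsProbabilityMeasure m],
      ∫ t, f t ∂m = (∫⁻ t in Set.Ioi 0, m {a | t < f a}).toReal := by
    intro m _
    rw [integral_eq_lintegral_of_nonneg_ae (ae_of_all _ hfnn) hfmeas.aestronglyMeasurable,
      lintegral_eq_lintegral_meas_lt m (ae_of_all _ hfnn) hfmeas.aemeasurable]
  have hcomp : ∫⁻ t in Set.Ioi 0, lam {a | t < f a} ≤ ∫⁻ t in Set.Ioi 0, ν {a | t < f a} :=
    lintegral_mono fun t => aux_upper_meas hle (fun a b hab ha => lt_of_lt_of_le ha (hfm hab))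
  have hfin : ∫⁻ t in Set.Ioi 0, ν {a | t < f a} ≠ ⊤ := by
    rw [← lintegral_eq_lintegral_meas_lt ν (ae_of_all _ hfnn) hfmeas.aemeasurable]
    refine ne_top_of_le_ne_top (by norm_num : (2:ENNReal) ≠ ⊤) ?_
    calc ∫⁻ t, ENNReal.ofReal (f t) ∂ν ≤ ∫⁻ _, 2 ∂ν :=
          lintegral_mono fun t => le_trans (ENNReal.ofReal_le_ofReal (hfle t)) (by norm_num)
      _ = 2 := by simp
  have e1 : ∫ t, f t ∂lam ≤ ∫ t, f t ∂ν := by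
    rw [key lam, key ν]; exact ENNReal.toReal_mono hfin hcomp
  have e2 : ∀ (m : Measure ℝ) [IsProbabilityMeasure m], ∫ t, f t ∂m = ∫ t, h t ∂m + 1 := by
    intro m _
    simp only [hf]
    rw [integral_add (hint m) (integrable_const 1), integral_const]
    simp
  rw [e2 lam, e2 ν] at e1
  linarith

lemma aux_exp_nonneg {ν lam : Measure ℝ} [IsProbabilityMeasure ν] [IsProbabilityMeasure lam]
    (hle : ∀ z, ν (Set.Iic z) ≤ lam (Set.Iic z)) {G : ℝ → ℝ → ℝ}
    (hGm : Measurable (Function.uncurry G)) (hGb : ∀ p q, |G p q| ≤ 1)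
    (hGa : ∀ p q, G p q = - G q p) (hGmono : ∀ p, Monotone (G p)) :
    0 ≤ ∫ p, G p.1 p.2 ∂(lam.prod ν) := by
  have hGint : ∀ (m m' : Measure ℝ) [IsProbabilityMeasure m] [IsProbabilityMeasure m'],
      Integrable (fun p : ℝ × ℝ => G p.1 p.2) (m.prod m') := by
    intro m m' _ _
    exact aux_integrable_bdd _ hGm.aestronglyMeasurable (fun p => hGb p.1 p.2)
  have h1 : ∫ p, G p.1 p.2 ∂(lam.prod ν) = ∫ y, ∫ x, G y x ∂ν ∂lam :=
    integral_prod _ (hGint lam ν)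
  have h2 : ∫ p, G p.1 p.2 ∂(lam.prod lam) = ∫ y, ∫ x, G y x ∂lam ∂lam :=
    integral_prod _ (hGint lam lam)
  have hmono : ∫ y, ∫ x, G y x ∂lam ∂lam ≤ ∫ y, ∫ x, G y x ∂ν ∂lam := by
    apply integral_mono ((hGint lam lam).integral_prod_left) ((hGint lam ν).integral_prod_left)
    intro y
    exact aux_mono_int hle (hGmono y) (fun t => hGb y t)
  have hswap : ∫ p, G p.1 p.2 ∂(lam.prod lam) = 0 := by
    have hs : ∫ p, G p.2 p.1 ∂(lam.prod lam) = ∫ p, G p.1 p.2 ∂(lam.prod lam) := by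
      have hmap : (lam.prod lam).map ((MeasurableEquiv.prodComm : ℝ × ℝ ≃ᵐ ℝ × ℝ)) = lam.prod lam := by
        exact MeasureTheory.Measure.prod_swap (μ := lam) (ν := lam)
      calc ∫ p, G p.2 p.1 ∂(lam.prod lam)
          = ∫ p, (fun q : ℝ × ℝ => G q.1 q.2) (((MeasurableEquiv.prodComm : ℝ × ℝ ≃ᵐ ℝ × ℝ)) p)
              ∂(lam.prod lam) := rfl
        _ = ∫ q, G q.1 q.2 ∂((lam.prod lam).map ((MeasurableEquiv.prodComm : ℝ × ℝ ≃ᵐ ℝ × ℝ))) :=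
            (integral_map_equiv (MeasurableEquiv.prodComm : ℝ × ℝ ≃ᵐ ℝ × ℝ) (fun q : ℝ × ℝ => G q.1 q.2)).symm
        _ = ∫ q, G q.1 q.2 ∂(lam.prod lam) := by rw [hmap]
    have hneg : ∫ p, G p.1 p.2 ∂(lam.prod lam) = - ∫ p, G p.2 p.1 ∂(lam.prod lam) := by
      rw [← integral_neg]
      exact integral_congr_ae (ae_of_all _ fun p => hGa p.1 p.2)
    rw [hs] at hneg
    linarith
  rw [h1]
  calc (0:ℝ) = ∫ y, ∫ x, G y x ∂lam ∂lam := by rw [← h2, hswap]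
    _ ≤ _ := hmono

/-- One-step hazard-rate bound for full-information learning via pairwise comparisons with
symmetric-switch functions `g_{b,a} = g_{a,b}`: with pairwise independent payoffs such that
payoffs of actions in `A*` first-order stochastically dominate all others and are
identically distributed within `A*`, the minimum `δ` of `E[g_{b,a}(x(b), x(a))]` over
`a ∈ A*`, `b ∉ A*` is nonnegative, and the expected performance increment of the update
`σ'(a) = σ(a) + σ(a)·Σ_{b≠a} σ(b)·g_{b,a}(x(b), x(a))` is at least `δ·P·(1 − P)` where
`P = Σ_{a∈A*} σ(a)`. -/
theorem stmt10 {Ω : Type*} [MeasurableSpace Ω] {μ : Measure Ω} [IsProbabilityMeasure μ]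
    {A : Type*} [Fintype A] [DecidableEq A] (Astar : Finset A)
    (xmin xmax : ℝ) (hx : xmin < xmax)
    (x : A → Ω → ℝ) (hx_meas : ∀ a, Measurable (x a))
    (hx_mem : ∀ a ω, x a ω ∈ Set.Icc xmin xmax)
    (hx_indep : ∀ a b : A, a ≠ b → IndepFun (x a) (x b) μ)
    (hx_fosd : ∀ a ∈ Astar, ∀ b : A, ∀ z : ℝ, μ {ω | x a ω ≤ z} ≤ μ {ω | x b ω ≤ z})
    (hx_id : ∀ a ∈ Astar, ∀ a' ∈ Astar, IdentDistrib (x a) (x a') μ μ)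
    (g : A → A → ℝ → ℝ → ℝ)
    (hg_symm_idx : ∀ a b : A, g a b = g b a)
    (hg_meas : ∀ a b : A, Measurable (Function.uncurry (g a b)))
    (hg_range : ∀ a b : A, ∀ x₁ ∈ Set.Icc xmin xmax, ∀ x₂ ∈ Set.Icc xmin xmax,
      g a b x₁ x₂ ∈ Set.Icc (-1 : ℝ) 1)
    (hg_anti : ∀ a b : A, ∀ x₁ ∈ Set.Icc xmin xmax, ∀ x₂ ∈ Set.Icc xmin xmax,
      g a b x₁ x₂ = -g a b x₂ x₁)
    (hg_mono : ∀ a b : A, ∀ x₁ ∈ Set.Icc xmin xmax, ∀ x₂ ∈ Set.Icc xmin xmax,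
      ∀ x₃ ∈ Set.Icc xmin xmax, x₂ ≤ x₃ → g a b x₁ x₂ ≤ g a b x₁ x₃)
    (hg_pos : ∀ a b : A, ∀ x₁ ∈ Set.Icc xmin xmax, ∀ x₂ ∈ Set.Icc xmin xmax,
      x₁ < x₂ → 0 ≤ g a b x₁ x₂)
    (σ : A → ℝ) (hσ_nonneg : ∀ a, 0 ≤ σ a) (hσ_sum : ∑ a, σ a = 1)
    (hne : (Astar ×ˢ Astarᶜ).Nonempty) :
    0 ≤ (Astar ×ˢ Astarᶜ).inf' hne
        (fun p => ∫ ω, g p.2 p.1 (x p.2 ω) (x p.1 ω) ∂μ) ∧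
    (Astar ×ˢ Astarᶜ).inf' hne (fun p => ∫ ω, g p.2 p.1 (x p.2 ω) (x p.1 ω) ∂μ)
        * ((∑ a ∈ Astar, σ a) * (1 - ∑ a ∈ Astar, σ a))
      ≤ (∫ ω, ∑ a ∈ Astar, (σ a + σ a * ∑ b ∈ Finset.univ.erase a,
            σ b * g b a (x b ω) (x a ω)) ∂μ)
        - ∑ a ∈ Astar, σ a := by
  -- clamping function
  have hclamp : ∀ t : ℝ, max xmin (min t xmax) ∈ Set.Icc xmin xmax := fun t =>
    ⟨le_max_left _ _, max_le hx.le (min_le_right _ _)⟩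
  have hceq : ∀ t ∈ Set.Icc xmin xmax, max xmin (min t xmax) = t := by
    intro t ht; rw [min_eq_left ht.2, max_eq_right ht.1]
  have hcmono : Monotone (fun t : ℝ => max xmin (min t xmax)) := fun s t hst =>
    max_le_max le_rfl (min_le_min hst le_rfl)
  have hcmeas : Measurable (fun t : ℝ => max xmin (min t xmax)) :=
    measurable_const.max (measurable_id.min measurable_const)
  -- basic integrability
  have hmeas_g : ∀ a b : A, Measurable (fun ω => g b a (x b ω) (x a ω)) := fun a b =>
    (hg_meas b a).comp ((hx_meas b).prodMk (hx_meas a))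
  have hbd_g : ∀ a b : A, ∀ ω, |g b a (x b ω) (x a ω)| ≤ 1 := fun a b ω =>
    abs_le.2 (hg_range b a _ (hx_mem b ω) _ (hx_mem a ω))
  have hint_g : ∀ a b : A, Integrable (fun ω => g b a (x b ω) (x a ω)) μ := fun a b =>
    aux_integrable_bdd μ (hmeas_g a b).aestronglyMeasurable (hbd_g a b)
  -- nonnegativity of the expectations over Astar × Astarᶜ
  have hpos : ∀ a ∈ Astar, ∀ b ∈ Astarᶜ, 0 ≤ ∫ ω, g b a (x b ω) (x a ω) ∂μ := by
    intro a ha b hb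
    have hba : b ≠ a := fun h => (Finset.mem_compl.1 hb) (h ▸ ha)
    set c : ℝ → ℝ := fun t => max xmin (min t xmax) with hcdef
    set G : ℝ → ℝ → ℝ := fun p q => g b a (c p) (c q) with hGdef
    have hGm : Measurable (Function.uncurry G) := by
      have : Function.uncurry G = fun pq : ℝ × ℝ =>
          Function.uncurry (g b a) (c pq.1, c pq.2) := rfl
      rw [this]
      exact (hg_meas b a).comp ((hcmeas.comp measurable_fst).prodMk (hcmeas.comp measurable_snd))
    have hGb : ∀ p q, |G p q| ≤ 1 := fun p q => abs_le.2 (hg_range b a _ (hclamp p) _ (hclamp q))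
    have hGa : ∀ p q, G p q = -G q p := fun p q => hg_anti b a _ (hclamp p) _ (hclamp q)
    have hGmono : ∀ p, Monotone (G p) := fun p s t hst =>
      hg_mono b a _ (hclamp p) _ (hclamp s) _ (hclamp t) (hcmono hst)
    set ν := μ.map (x a) with hν
    set lam := μ.map (x b) with hlam
    haveI : IsProbabilityMeasure ν := Measure.isProbabilityMeasure_map (hx_meas a).aemeasurable
    haveI : IsProbabilityMeasure lam := Measure.isProbabilityMeasure_map (hx_meas b).aemeasurable
    have hle : ∀ z, ν (Set.Iic z) ≤ lam (Set.Iic z) := by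
      intro z
      rw [hν, hlam, Measure.map_apply (hx_meas a) measurableSet_Iic,
        Measure.map_apply (hx_meas b) measurableSet_Iic]
      exact hx_fosd a ha b z
    have hprod : μ.map (fun ω => (x b ω, x a ω)) = lam.prod ν :=
      (indepFun_iff_map_prod_eq_prod_map_map (hx_meas b).aemeasurable
        (hx_meas a).aemeasurable).1 (hx_indep b a hba)
    have heq : ∫ p : ℝ × ℝ, G p.1 p.2 ∂(lam.prod ν) = ∫ ω, g b a (x b ω) (x a ω) ∂μ := by
      rw [← hprod, integral_map ((hx_meas b).prodMk (hx_meas a)).aemeasurable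
        (by exact hGm.aestronglyMeasurable)]
      refine integral_congr_ae (ae_of_all _ fun ω => ?_)
      simp only [hGdef, hcdef]
      rw [hceq _ (hx_mem b ω), hceq _ (hx_mem a ω)]
    rw [← heq]
    exact aux_exp_nonneg hle hGm hGb hGa hGmono
  -- within Astar, expectations vanish
  have hzero : ∀ a ∈ Astar, ∀ b ∈ Astar, a ≠ b → ∫ ω, g b a (x b ω) (x a ω) ∂μ = 0 := by
    intro a ha b hb hab
    have hmapeq : μ.map (x a) = μ.map (x b) := (hx_id a ha b hb).map_eq
    have h1 := (indepFun_iff_map_prod_eq_prod_map_map (hx_meas a).aemeasurable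
      (hx_meas b).aemeasurable).1 (hx_indep a b hab)
    have h2 := (indepFun_iff_map_prod_eq_prod_map_map (hx_meas b).aemeasurable
      (hx_meas a).aemeasurable).1 (hx_indep b a hab.symm)
    have hpair : IdentDistrib (fun ω => (x a ω, x b ω)) (fun ω => (x b ω, x a ω)) μ μ := by
      refine ⟨((hx_meas a).prodMk (hx_meas b)).aemeasurable,
        ((hx_meas b).prodMk (hx_meas a)).aemeasurable, ?_⟩
      rw [h1, h2, hmapeq]
    have hinteq : ∫ ω, g b a (x a ω) (x b ω) ∂μ = ∫ ω, g b a (x b ω) (x a ω) ∂μ :=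
      (hpair.comp (hg_meas b a)).integral_eq
    have hanti : (fun ω => g b a (x a ω) (x b ω)) = fun ω => -(g b a (x b ω) (x a ω)) :=
      funext fun ω => hg_anti b a _ (hx_mem a ω) _ (hx_mem b ω)
    rw [hanti, integral_neg] at hinteq
    linarith
  set P := ∑ a ∈ Astar, σ a with hP
  set δ := (Astar ×ˢ Astarᶜ).inf' hne
    (fun p => ∫ ω, g p.2 p.1 (x p.2 ω) (x p.1 ω) ∂μ) with hδ
  have hδnn : 0 ≤ δ := by
    apply Finset.le_inf'
    rintro ⟨a, b⟩ hp
    rw [Finset.mem_product] at hp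
    exact hpos a hp.1 b hp.2
  refine ⟨hδnn, ?_⟩
  -- compute the integral of the sum
  have hint_inner : ∀ a : A,
      Integrable (fun ω => ∑ b ∈ Finset.univ.erase a, σ b * g b a (x b ω) (x a ω)) μ :=
    fun a => integrable_finset_sum _ fun b _ => (hint_g a b).const_mul _
  have hint_term : ∀ a : A, Integrable (fun ω => σ a + σ a * ∑ b ∈ Finset.univ.erase a,
      σ b * g b a (x b ω) (x a ω)) μ :=
    fun a => (integrable_const _).add ((hint_inner a).const_mul _)
  have hIcalc : ∫ ω, ∑ a ∈ Astar, (σ a + σ a * ∑ b ∈ Finset.univ.erase a,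
        σ b * g b a (x b ω) (x a ω)) ∂μ
      = ∑ a ∈ Astar, (σ a + σ a * ∑ b ∈ Finset.univ.erase a,
        σ b * ∫ ω, g b a (x b ω) (x a ω) ∂μ) := by
    rw [integral_finset_sum _ (fun a _ => hint_term a)]
    refine Finset.sum_congr rfl fun a _ => ?_
    rw [integral_add (integrable_const _) ((hint_inner a).const_mul _), integral_const]
    simp only [measure_univ, probReal_univ, ENNReal.toReal_one, smul_eq_mul, one_mul]
    congr 1
    rw [integral_const_mul, integral_finset_sum _ (fun b _ => (hint_g a b).const_mul _)]
    congr 1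
    exact Finset.sum_congr rfl fun b _ => integral_const_mul _ _
  rw [hIcalc, Finset.sum_add_distrib, ← hP]
  have hgoal : δ * (P * (1 - P)) ≤ ∑ a ∈ Astar, σ a * ∑ b ∈ Finset.univ.erase a,
      σ b * ∫ ω, g b a (x b ω) (x a ω) ∂μ := by
    have herase : ∀ a ∈ Astar, Finset.univ.erase a = (Astar.erase a) ∪ Astarᶜ := by
      intro a ha
      ext b
      simp only [Finset.mem_erase, Finset.mem_union, Finset.mem_compl, Finset.mem_univ, and_true]
      constructor
      · intro hb
        by_cases hbA : b ∈ Astar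
        · exact Or.inl ⟨hb, hbA⟩
        · exact Or.inr hbA
      · rintro (⟨hb, _⟩ | hb)
        · exact hb
        · rintro rfl; exact hb ha
    have hdisj : ∀ a : A, Disjoint (Astar.erase a) Astarᶜ := fun a =>
      Finset.disjoint_left.2 fun b hb hb' => (Finset.mem_compl.1 hb') (Finset.mem_of_mem_erase hb)
    have hcompl_sum : ∑ b ∈ Astarᶜ, σ b = 1 - P := by
      have h := Finset.sum_add_sum_compl Astar σ
      rw [hσ_sum] at h
      linarith
    have hδle : ∀ a ∈ Astar, ∀ b ∈ Astarᶜ, δ ≤ ∫ ω, g b a (x b ω) (x a ω) ∂μ := by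
      intro a ha b hb
      rw [hδ]
      have hmem : (a, b) ∈ Astar ×ˢ Astarᶜ := Finset.mem_product.2 ⟨ha, hb⟩
      exact Finset.inf'_le (fun p => ∫ ω, g p.2 p.1 (x p.2 ω) (x p.1 ω) ∂μ) hmem
    have hstep : ∀ a ∈ Astar, δ * (1 - P) ≤ ∑ b ∈ Finset.univ.erase a,
        σ b * ∫ ω, g b a (x b ω) (x a ω) ∂μ := by
      intro a ha
      rw [herase a ha, Finset.sum_union (hdisj a)]
      have h0 : ∑ b ∈ Astar.erase a, σ b * ∫ ω, g b a (x b ω) (x a ω) ∂μ = 0 :=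
        Finset.sum_eq_zero fun b hb => by
          rw [hzero a ha b (Finset.mem_of_mem_erase hb)
            (fun h => (Finset.ne_of_mem_erase hb) h.symm), mul_zero]
      rw [h0, zero_add]
      calc δ * (1 - P) = ∑ b ∈ Astarᶜ, σ b * δ := by rw [← Finset.sum_mul, hcompl_sum]; ring
        _ ≤ ∑ b ∈ Astarᶜ, σ b * ∫ ω, g b a (x b ω) (x a ω) ∂μ :=
          Finset.sum_le_sum fun b hb => mul_le_mul_of_nonneg_left
            (hδle a ha b hb) (hσ_nonneg b)
    calc δ * (P * (1 - P)) = ∑ a ∈ Astar, σ a * (δ * (1 - P)) := by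
          rw [← Finset.sum_mul, ← hP]; ring
      _ ≤ _ := Finset.sum_le_sum fun a ha =>
          mul_le_mul_of_nonneg_left (hstep a ha) (hσ_nonneg a)
  linarith
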